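/- Fix μ_1,...,μ_k > 0 and let f(t_1,...,t_k) = ∏_{i=1}^k t_i/(t_i+μ_i). If U ⊆ R_+^k is an open convex set on which f is concave, then U ⊆ D_k(μ_1,...,μ_k). -/

import Mathlib

open Matrix Filter Topology Set

private lemma deriv_nonneg_of_monotoneOn' {a b x g' : ℝ} {g : ℝ → ℝ} (hx : x ∈ Set.Ioo a b)
    (hm : MonotoneOn g (Set.Ioo a b)) (hd : HasDerivAt g g' x) : 0 ≤ g' := by
  have h := hasDerivAt_iff_tendsto_slope.mp hd
  have h2 : Tendsto (slope g x) (𝓝[>] x) (𝓝 g') :=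
    h.mono_left (nhdsWithin_mono _ (fun y hy => ne_of_gt hy))
  refine ge_of_tendsto h2 ?_
  filter_upwards [Ioo_mem_nhdsGT_of_mem ⟨le_refl x, hx.2⟩] with y hy
  rw [slope_def_field]
  have := hm hx ⟨hx.1.trans hy.1, hy.2⟩ hy.1.le
  have hyx : 0 < y - x := by linarith [hy.1]
  exact div_nonneg (by linarith) hyx.le

/-- Core analytic fact: if `s ↦ ∏ (tᵢ+s wᵢ)/(tᵢ+s wᵢ+μᵢ)` is concave on an interval around `0`
where all coordinates stay positive, then the second derivative at `0` is nonpositive. -/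
private lemma line_ineq' {k : ℕ} (μ t w : Fin k → ℝ) (hμ : ∀ i, 0 < μ i) (ε : ℝ) (hε : 0 < ε)
    (hpos : ∀ s ∈ Set.Ioo (-ε) ε, ∀ i, 0 < t i + s * w i)
    (hconc : ConcaveOn ℝ (Set.Ioo (-ε) ε)
      (fun s => ∏ i, (t i + s * w i) / (t i + s * w i + μ i))) :
    (∑ i, (- (w i)^2 / (t i)^2 + (w i)^2 / (t i + μ i)^2))
      + (∑ i, (w i / t i - w i / (t i + μ i)))^2 ≤ 0 := by
  set I := Set.Ioo (-ε) ε with hI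
  have h0 : (0:ℝ) ∈ I := ⟨by linarith, hε⟩
  set φ : ℝ → ℝ := fun s => ∏ i, (t i + s * w i) / (t i + s * w i + μ i) with hφ
  set S : ℝ → ℝ := fun s => ∑ i, (Real.log (t i + s * w i) - Real.log (t i + s * w i + μ i))
    with hS
  set S1 : ℝ → ℝ := fun s => ∑ i, (w i / (t i + s * w i) - w i / (t i + s * w i + μ i))
    with hS1
  set S2 : ℝ := ∑ i, (- (w i)^2 / (t i)^2 + (w i)^2 / (t i + μ i)^2) with hS2
  have hposμ : ∀ s ∈ I, ∀ i, 0 < t i + s * w i + μ i := fun s hs i => by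
    have := hpos s hs i; have := hμ i; linarith
  have hlin : ∀ (i : Fin k) (s : ℝ), HasDerivAt (fun y => t i + y * w i) (w i) s := by
    intro i s
    simpa using ((hasDerivAt_id s).mul_const (w i)).const_add (t i)
  have hSd : ∀ s ∈ I, HasDerivAt S (S1 s) s := by
    intro s hs
    refine HasDerivAt.fun_sum (fun i _ => ?_)
    exact ((hlin i s).log (ne_of_gt (hpos s hs i))).sub
      (((hlin i s).add_const (μ i)).log (ne_of_gt (hposμ s hs i)))
  have hφS : ∀ s ∈ I, φ s = Real.exp (S s) := by
    intro s hs
    rw [hφ, hS]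
    simp only [Real.exp_sum, Real.exp_sub]
    refine Finset.prod_congr rfl (fun i _ => ?_)
    rw [Real.exp_log (hpos s hs i), Real.exp_log (hposμ s hs i)]
  have hIopen : IsOpen I := isOpen_Ioo
  have hφd : ∀ s ∈ I, HasDerivAt φ (Real.exp (S s) * S1 s) s := by
    intro s hs
    refine HasDerivAt.congr_of_eventuallyEq ((hSd s hs).exp) ?_
    filter_upwards [hIopen.mem_nhds hs] with y hy using hφS y hy
  have hS1d : HasDerivAt S1 S2 0 := by
    have : HasDerivAt S1
        (∑ i, ((0 * (t i + 0 * w i) - w i * w i) / (t i + 0 * w i)^2 -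
          (0 * (t i + 0 * w i + μ i) - w i * w i) / (t i + 0 * w i + μ i)^2)) 0 := by
      refine HasDerivAt.fun_sum (fun i _ => ?_)
      exact ((hasDerivAt_const 0 (w i)).div (hlin i 0) (ne_of_gt (hpos 0 h0 i))).sub
        ((hasDerivAt_const 0 (w i)).div ((hlin i 0).add_const (μ i))
          (ne_of_gt (hposμ 0 h0 i)))
    convert this using 1
    rw [hS2]
    refine Finset.sum_congr rfl (fun i _ => ?_)
    ring
  set c : ℝ := Real.exp (S 0) * (S2 + S1 0 * S1 0) with hc
  have hD1d : HasDerivAt (fun s => Real.exp (S s) * S1 s) c 0 := by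
    have : HasDerivAt (fun s => Real.exp (S s) * S1 s) _ 0 := ((hSd 0 h0).exp).mul hS1d
    convert this using 1
    rw [hc]; ring
  have hφ2 : HasDerivAt (deriv φ) c 0 := by
    refine hD1d.congr_of_eventuallyEq ?_
    filter_upwards [hIopen.mem_nhds h0] with y hy using ((hφd y hy).deriv).symm ▸ rfl
  have hmono : MonotoneOn (deriv (fun s => -φ s)) I :=
    ConvexOn.monotoneOn_deriv hconc.neg (fun s hs => ((hφd s hs).neg).differentiableAt)
  have hmono' : MonotoneOn (fun s => -(deriv φ s)) I := by
    intro x hx y hy hxy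
    have hx' := (deriv.neg (f := φ) (x := x))
    have hy' := (deriv.neg (f := φ) (x := y))
    have := hmono hx hy hxy
    simpa [hx', hy'] using this
  have hnegc : 0 ≤ -c := deriv_nonneg_of_monotoneOn' h0 hmono' hφ2.neg
  have hexp : 0 < Real.exp (S 0) := Real.exp_pos _
  have hfin : S2 + S1 0 * S1 0 ≤ 0 := by
    by_contra h
    push_neg at h
    nlinarith
  have e1 : S1 0 = ∑ i, (w i / t i - w i / (t i + μ i)) := by
    rw [hS1]; refine Finset.sum_congr rfl (fun i _ => by norm_num)
  calc (∑ i, (- (w i)^2 / (t i)^2 + (w i)^2 / (t i + μ i)^2))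
      + (∑ i, (w i / t i - w i / (t i + μ i)))^2
      = S2 + S1 0 * S1 0 := by rw [hS2, e1, sq]
    _ ≤ 0 := hfin

/-- The matrix `A_k(t)` with diagonal entries `2tᵢ/μᵢ` and off-diagonal entries `-1`. -/
noncomputable def Amat {k : ℕ} (μ t : Fin k → ℝ) : Matrix (Fin k) (Fin k) ℝ :=
  Matrix.of fun i j => if i = j then 2 * t i / μ i else -1

/-- The domain `D_k(μ₁,…,μ_k)`. -/
def Dk {k : ℕ} (μ : Fin k → ℝ) : Set (Fin k → ℝ) :=
  {t | (∀ i, 0 < t i) ∧ (Amat μ t).PosSemidef}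

/-- Any open convex subset of the positive orthant on which
`f(t₁,…,t_k) = ∏ tᵢ/(tᵢ+μᵢ)` is concave is contained in `D_k(μ₁,…,μ_k)`. -/
theorem open_convex_concave_subset_Dk {k : ℕ} (μ : Fin k → ℝ) (hμ : ∀ i, 0 < μ i)
    (U : Set (Fin k → ℝ)) (hUopen : IsOpen U) (hUconv : Convex ℝ U)
    (hUpos : ∀ t ∈ U, ∀ i, 0 < t i)
    (hconc : ConcaveOn ℝ U (fun t => ∏ i, t i / (t i + μ i))) :
    U ⊆ Dk μ := by
  intro t ht
  have ht' : ∀ i, 0 < t i := hUpos t ht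
  refine ⟨ht', posSemidef_iff_dotProduct_mulVec.mpr ⟨?_, ?_⟩⟩
  · -- Hermitian
    show (Amat μ t)ᴴ = Amat μ t
    ext i j
    by_cases h : i = j
    · subst h; simp [Amat]
    · simp [Amat, Matrix.conjTranspose_apply, h, Ne.symm h]
  · -- quadratic form nonneg
    intro v
    set w : Fin k → ℝ := fun i => v i * (t i * (t i + μ i)) / μ i with hw
    -- set up the line
    set L : ℝ → (Fin k → ℝ) := fun s i => t i + s * w i with hL
    have hLcont : Continuous L :=
      continuous_pi fun i => continuous_const.add (continuous_id.mul continuous_const)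
    have hpre : IsOpen (L ⁻¹' U) := hUopen.preimage hLcont
    have h0 : (0:ℝ) ∈ L ⁻¹' U := by
      have : L 0 = t := by funext i; simp [hL]
      simp [Set.mem_preimage, this, ht]
    obtain ⟨ε, hε, hball⟩ := Metric.isOpen_iff.mp hpre 0 h0
    rw [Real.ball_eq_Ioo] at hball
    simp only [zero_sub, zero_add] at hball
    have hpos : ∀ s ∈ Set.Ioo (-ε) ε, ∀ i, 0 < t i + s * w i :=
      fun s hs i => hUpos _ (hball hs) i
    have hconc' : ConcaveOn ℝ (Set.Ioo (-ε) ε)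
        (fun s => ∏ i, (t i + s * w i) / (t i + s * w i + μ i)) := by
      refine ⟨convex_Ioo _ _, ?_⟩
      intro x hx y hy a b ha hb hab
      have hcomb : L (a * x + b * y) = a • L x + b • L y := by
        funext i
        simp only [hL, Pi.add_apply, Pi.smul_apply, smul_eq_mul]
        linear_combination (-(t i)) * hab
      have h2 := hconc.2 (hball hx) (hball hy) ha hb hab
      rw [← hcomb] at h2
      exact h2
    have key := line_ineq' μ t w hμ ε hε hpos hconc'
    -- now algebra
    have hne : ∀ i, t i ≠ 0 := fun i => (ht' i).ne'
    have hne2 : ∀ i, t i + μ i ≠ 0 := fun i => by have := ht' i; have := hμ i; positivity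
    have hne3 : ∀ i, μ i ≠ 0 := fun i => (hμ i).ne'
    have hB : (∑ i, (w i / t i - w i / (t i + μ i))) = ∑ i, v i := by
      refine Finset.sum_congr rfl (fun i _ => ?_)
      rw [hw]
      have h1 := hne i; have h2 := hne2 i; have h3 := hne3 i
      field_simp
      ring
    have hA : (∑ i, (- (w i)^2 / (t i)^2 + (w i)^2 / (t i + μ i)^2))
        = ∑ i, (-((2 * t i / μ i + 1) * v i ^ 2)) := by
      refine Finset.sum_congr rfl (fun i _ => ?_)
      rw [hw]
      have h1 := hne i; have h2 := hne2 i; have h3 := hne3 i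
      field_simp
      ring
    rw [hA, hB] at key
    have hexpand : star v ⬝ᵥ Amat μ t *ᵥ v
        = ∑ i, ((2 * t i / μ i + 1) * v i ^ 2) - (∑ i, v i)^2 := by
      simp only [dotProduct, Matrix.mulVec, Amat, Matrix.of_apply, Pi.star_apply,
        star_trivial]
      have hrow : ∀ i : Fin k, (∑ j, (if i = j then 2 * t i / μ i else -1) * v j)
          = (2 * t i / μ i + 1) * v i - ∑ j, v j := by
        intro i
        have hsplit : ∀ j : Fin k, (if i = j then 2 * t i / μ i else -1) * v j
            = (if i = j then (2 * t i / μ i + 1) * v j else 0) + (-1) * v j := by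
          intro j
          by_cases h : i = j <;> simp [h] <;> ring
        rw [Finset.sum_congr rfl (fun j _ => hsplit j), Finset.sum_add_distrib,
          Finset.sum_ite_eq]
        simp
        ring
      calc ∑ i, v i * (∑ j, (if i = j then 2 * t i / μ i else -1) * v j)
          = ∑ i, (v i * ((2 * t i / μ i + 1) * v i) - v i * ∑ j, v j) := by
            refine Finset.sum_congr rfl fun i _ => by rw [hrow i]; ring
        _ = ∑ i, ((2 * t i / μ i + 1) * v i ^ 2) - (∑ i, v i) ^ 2 := by
            rw [Finset.sum_sub_distrib, ← Finset.sum_mul]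
            congr 1
            · exact Finset.sum_congr rfl fun i _ => by ring
            · rw [sq]
    rw [hexpand]
    rw [Finset.sum_neg_distrib] at key
    linarith
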